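/- For n prime, the symmetric function p₁ⁿ − pₙ equals the sum over all permutations π ∈ S_n of the fundamental quasisymmetric function F_{Des(π c π⁻¹)}, where c is the cyclic shift on [n]. -/

import Mathlib

open Classical in
/-- The power sum symmetric function `p_i = x₁^i + x₂^i + ⋯` (variables indexed by `ℕ`),
as a multivariate power series: the coefficient of a monomial `d` is 1 iff `d = x_j^i`. -/
noncomputable def powerSum (i : ℕ) : MvPowerSeries ℕ ℚ :=
  fun d => if ∃ j, d = Finsupp.single j i then 1 else 0

/-- The fundamental quasisymmetric function `F_S` of degree `n` (0-indexed descent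
positions `S ⊆ {0, …, n-2}`): the coefficient of a monomial `d` is the number of weakly
increasing sequences `g : Fin n → ℕ`, strictly increasing from position `i` to `i+1`
for `i ∈ S`, whose content is `d`. -/
noncomputable def funF (n : ℕ) (S : Set ℕ) : MvPowerSeries ℕ ℚ :=
  fun d => (Nat.card {g : Fin n → ℕ //
    (∀ i : ℕ, ∀ h : i + 1 < n,
      g ⟨i, Nat.lt_of_succ_lt h⟩ ≤ g ⟨i + 1, h⟩ ∧
      (i ∈ S → g ⟨i, Nat.lt_of_succ_lt h⟩ < g ⟨i + 1, h⟩)) ∧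
    ∀ j : ℕ, d j = Nat.card {t : Fin n // g t = j}} : ℚ)

/-- The (0-indexed) descent set of a map `σ : Fin n → Fin n`:
positions `i` with `σ(i) > σ(i+1)`. -/
def desSet (n : ℕ) (σ : Fin n → Fin n) : Set ℕ :=
  {i | ∃ h : i + 1 < n, σ ⟨i + 1, h⟩ < σ ⟨i, Nat.lt_of_succ_lt h⟩}

/-- `χ ∈ A(π, S)`: the coloring `χ` is weakly increasing along `π⁻¹(0), …, π⁻¹(n-1)`,
strictly from position `i` to `i+1` whenever `i ∈ S`. -/
def inA (n : ℕ) (π : Equiv.Perm (Fin n)) (S : Set ℕ) (χ : Fin n → ℕ) : Prop :=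
  ∀ i : ℕ, ∀ h : i + 1 < n,
    χ (π.symm ⟨i, Nat.lt_of_succ_lt h⟩) ≤ χ (π.symm ⟨i + 1, h⟩) ∧
    (i ∈ S → χ (π.symm ⟨i, Nat.lt_of_succ_lt h⟩) < χ (π.symm ⟨i + 1, h⟩))

namespace CycAux

open Finset

/-- Content predicate: `d` records the fiber sizes of `f`. -/
def Cont (n : ℕ) (f : Fin n → ℕ) (d : ℕ →₀ ℕ) : Prop :=
  ∀ j : ℕ, d j = Nat.card {t : Fin n // f t = j}

/-- The first condition in `funF`. -/
def Fpred (n : ℕ) (S : Set ℕ) (g : Fin n → ℕ) : Prop :=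
  ∀ i : ℕ, ∀ h : i + 1 < n,
      g ⟨i, Nat.lt_of_succ_lt h⟩ ≤ g ⟨i + 1, h⟩ ∧
      (i ∈ S → g ⟨i, Nat.lt_of_succ_lt h⟩ < g ⟨i + 1, h⟩)

lemma funF_apply (n : ℕ) (S : Set ℕ) (d : ℕ →₀ ℕ) :
    funF n S d = (Nat.card {g : Fin n → ℕ // Fpred n S g ∧ Cont n g d} : ℚ) := rfl

lemma natCard_fiber {n : ℕ} (f : Fin n → ℕ) (j : ℕ) :
    Nat.card {t : Fin n // f t = j} = (univ.filter fun t => f t = j).card := by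
  classical
  rw [Nat.card_eq_fintype_card, Fintype.card_subtype]

lemma sum_single_apply {n : ℕ} (f : Fin n → ℕ) (j : ℕ) :
    (∑ i : Fin n, Finsupp.single (f i) (1 : ℕ)) j = Nat.card {t : Fin n // f t = j} := by
  classical
  rw [natCard_fiber, card_filter, Finsupp.finset_sum_apply]
  exact Finset.sum_congr rfl fun i _ => by rw [Finsupp.single_apply]

lemma cont_iff {n : ℕ} (f : Fin n → ℕ) (d : ℕ →₀ ℕ) :
    Cont n f d ↔ d = ∑ i : Fin n, Finsupp.single (f i) 1 := by
  constructor
  · intro h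
    ext j
    rw [sum_single_apply]
    exact h j
  · intro h j
    rw [h, sum_single_apply]

open Classical in
lemma card_filter_cont (n : ℕ) (d : ℕ →₀ ℕ) :
    ((Finset.finsuppAntidiag (univ : Finset (Fin n)) d).filter
        fun l => ∀ i ∈ (univ : Finset (Fin n)), ∃ j, l i = Finsupp.single j 1).card
      = Nat.card {f : Fin n → ℕ // Cont n f d} := by
  rw [← Nat.card_eq_finsetCard]
  refine Nat.card_congr (Equiv.symm (Equiv.ofBijective
    (fun f : {f : Fin n → ℕ // Cont n f d} =>
      (⟨Finsupp.equivFunOnFinite.symm fun i => Finsupp.single (f.1 i) 1, by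
        rw [Finset.mem_filter, Finset.mem_finsuppAntidiag]
        refine ⟨⟨?_, Finset.subset_univ _⟩, fun i _ => ⟨f.1 i, by simp⟩⟩
        have hd := (cont_iff f.1 d).1 f.2
        calc (∑ i : Fin n, Finsupp.equivFunOnFinite.symm
                (fun i => Finsupp.single (f.1 i) (1:ℕ)) i)
            = ∑ i : Fin n, Finsupp.single (f.1 i) 1 := by
              refine Finset.sum_congr rfl fun i _ => ?_
              simp [Finsupp.equivFunOnFinite]
          _ = d := hd.symm⟩ :
        {l // l ∈ (Finset.finsuppAntidiag (univ : Finset (Fin n)) d).filter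
          fun l => ∀ i ∈ (univ : Finset (Fin n)), ∃ j, l i = Finsupp.single j 1})) ?_))
  constructor
  · rintro ⟨f, hf⟩ ⟨g, hg⟩ h
    simp only [Subtype.mk.injEq] at h
    have h1 := Finsupp.equivFunOnFinite.symm.injective h
    refine Subtype.ext (funext fun i => ?_)
    have h2 : Finsupp.single (f i) (1:ℕ) = Finsupp.single (g i) 1 := congrFun h1 i
    exact (Finsupp.single_left_inj one_ne_zero).1 h2
  · rintro ⟨l, hl⟩
    rw [Finset.mem_filter, Finset.mem_finsuppAntidiag] at hl
    obtain ⟨⟨hsum, -⟩, hP⟩ := hl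
    choose jf hjf using fun i => hP i (Finset.mem_univ i)
    refine ⟨⟨jf, ?_⟩, ?_⟩
    · rw [cont_iff]
      rw [← hsum]
      exact Finset.sum_congr rfl fun i _ => hjf i
    · apply Subtype.ext
      simp only
      rw [Equiv.symm_apply_eq]
      funext i
      simpa using (hjf i).symm

open Classical in
lemma coeff_pow_one (n : ℕ) (d : ℕ →₀ ℕ) :
    (powerSum 1 ^ n) d = (Nat.card {f : Fin n → ℕ // Cont n f d} : ℚ) := by
  have h1 : powerSum 1 ^ n = ∏ _i : Fin n, powerSum 1 := by
    rw [Finset.prod_const, Finset.card_univ, Fintype.card_fin]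
  have h2 : (powerSum 1 ^ n) d = MvPowerSeries.coeff d (∏ _i : Fin n, powerSum 1) := by
    rw [← h1]; rfl
  rw [h2, MvPowerSeries.coeff_prod]
  have h3 : ∀ l ∈ Finset.finsuppAntidiag (univ : Finset (Fin n)) d,
      (∏ i : Fin n, MvPowerSeries.coeff (l i) (powerSum 1)) =
        if ∀ i ∈ (univ : Finset (Fin n)), ∃ j, l i = Finsupp.single j 1 then (1:ℚ) else 0 := by
    intro l _
    have h4 : ∀ i : Fin n, MvPowerSeries.coeff (l i) (powerSum 1) =
        if ∃ j, l i = Finsupp.single j 1 then (1:ℚ) else 0 := fun i => rfl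
    simp only [h4]
    rw [Finset.prod_ite_zero]
    simp
  rw [Finset.sum_congr rfl h3, Finset.sum_boole, ← card_filter_cont n d]

open Classical in
lemma powerSum_apply (m : ℕ) (d : ℕ →₀ ℕ) :
    powerSum m d = if ∃ j, d = Finsupp.single j m then (1:ℚ) else 0 := rfl

section Cyclic

open Fin.NatCast Fin.CommRing

variable {n : ℕ} [NeZero n]

/-- The infinite periodic word of colours read cyclically from `t`. -/
def Wd (χ : Fin n → ℕ) (t : Fin n) : ℕ → ℕ := fun k => χ (t + (k : Fin n))

/-- The same word, considered in the lexicographic order. -/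
noncomputable def Vw (χ : Fin n → ℕ) (t : Fin n) : Lex (ℕ → ℕ) := toLex (Wd χ t)

lemma lex_lt_iff {f g : ℕ → ℕ} :
    toLex f < toLex g ↔ ∃ k : ℕ, (∀ m, m < k → f m = g m) ∧ f k < g k := Iff.rfl

lemma Wd_zero (χ : Fin n → ℕ) (t : Fin n) : Wd χ t 0 = χ t := by
  show χ (t + ((0 : ℕ) : Fin n)) = χ t
  norm_num

lemma Wd_succ (χ : Fin n → ℕ) (t : Fin n) (k : ℕ) : Wd χ t (k + 1) = Wd χ (t + 1) k := by
  show χ (t + (((k : ℕ) + 1 : ℕ) : Fin n)) = χ (t + 1 + ((k : ℕ) : Fin n))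
  congr 1
  push_cast
  ring

lemma Vw_injective (hn : n.Prime) {χ : Fin n → ℕ} (hnc : ∃ t s, χ t ≠ χ s) :
    Function.Injective (Vw χ) := by
  intro t s h
  by_contra hts
  have hall : ∀ k : ℕ, χ (t + (k : Fin n)) = χ (s + (k : Fin n)) := by
    intro k
    exact congrFun (toLex.injective h) k
  -- shift invariance by r = s - t
  set r : Fin n := s - t with hr
  have hrne : r ≠ 0 := sub_ne_zero.2 (Ne.symm hts)
  have hstep : ∀ x : Fin n, χ x = χ (x + r) := by
    intro x
    have h1 := hall ((x - t : Fin n) : ℕ)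
    rw [Fin.cast_val_eq_self] at h1
    have e1 : t + (x - t) = x := by ring
    have e2 : s + (x - t) = x + r := by rw [hr]; ring
    rw [e1, e2] at h1
    exact h1
  have hsmul : ∀ (k : ℕ) (x : Fin n), χ (x + k • r) = χ x := by
    intro k
    induction k with
    | zero => intro x; simp
    | succ m ih =>
      intro x
      rw [succ_nsmul, ← add_assoc]
      rw [← hstep (x + m • r)]
      exact ih x
  -- r generates the whole group since n is prime
  have hord : addOrderOf r = n := by
    have h1 : addOrderOf r ∣ n := by
      have := addOrderOf_dvd_card (x := r)
      rwa [Fintype.card_fin] at this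
    rcases (Nat.Prime.eq_one_or_self_of_dvd hn _ h1) with h2 | h2
    · exact absurd (AddMonoid.addOrderOf_eq_one_iff.1 h2) hrne
    · exact h2
  have key : ∀ a b : Fin n, a < b → (a : ℕ) • r = (b : ℕ) • r → False := by
    intro a b hlt hab
    have hvlt : (a : ℕ) < (b : ℕ) := hlt
    have h1 : ((b : ℕ) - (a : ℕ)) • r + (a : ℕ) • r = (b : ℕ) • r := by
      rw [← add_nsmul]
      congr 1
      omega
    have h2 : ((b : ℕ) - (a : ℕ)) • r + (a : ℕ) • r = 0 + (a : ℕ) • r := by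
      rw [h1, ← hab, zero_add]
    have hsub : ((b : ℕ) - (a : ℕ)) • r = 0 := add_right_cancel h2
    have h3 := addOrderOf_dvd_of_nsmul_eq_zero hsub
    rw [hord] at h3
    have hblt : (b : ℕ) < n := b.isLt
    have hpos : 0 < (b : ℕ) - (a : ℕ) := by omega
    exact absurd (Nat.le_of_dvd hpos h3) (by omega)
  have hsurj : Function.Surjective (fun m : Fin n => (m : ℕ) • r) := by
    apply Finite.surjective_of_injective
    intro a b hab
    by_contra hne
    rcases Ne.lt_or_gt hne with hlt | hlt
    · exact key a b hlt hab
    · exact key b a hlt hab.symm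
  obtain ⟨u, v, huv⟩ := hnc
  apply huv
  obtain ⟨m, hm⟩ := hsurj (v - u)
  have e : u + ((m : ℕ)) • r = v := by
    simp only at hm
    rw [hm]
    ring
  calc χ u = χ (u + (m : ℕ) • r) := (hsmul _ _).symm
    _ = χ v := by rw [e]

lemma Vw_lt_iff {χ : Fin n → ℕ} {t s : Fin n} :
    Vw χ t < Vw χ s ↔
      ∃ k : ℕ, (∀ m, m < k → Wd χ t m = Wd χ s m) ∧ Wd χ t k < Wd χ s k := Iff.rfl

lemma head_le {χ : Fin n → ℕ} {t s : Fin n} (h : Vw χ t < Vw χ s) : χ t ≤ χ s := by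
  obtain ⟨k, hpre, hlt⟩ := Vw_lt_iff.1 h
  cases k with
  | zero =>
    rw [← Wd_zero χ t, ← Wd_zero χ s]
    exact le_of_lt hlt
  | succ m =>
    rw [← Wd_zero χ t, ← Wd_zero χ s]
    exact le_of_eq (hpre 0 (Nat.succ_pos m))

lemma shift_lt {χ : Fin n → ℕ} {t s : Fin n} (h : Vw χ t < Vw χ s) (h0 : χ t = χ s) :
    Vw χ (t + 1) < Vw χ (s + 1) := by
  obtain ⟨k, hpre, hlt⟩ := Vw_lt_iff.1 h
  cases k with
  | zero =>
    rw [Wd_zero χ t, Wd_zero χ s] at hlt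
    exact absurd h0 (ne_of_lt hlt)
  | succ m =>
    refine Vw_lt_iff.2 ⟨m, fun j hj => ?_, ?_⟩
    · rw [← Wd_succ, ← Wd_succ]
      exact hpre (j + 1) (Nat.succ_lt_succ hj)
    · rw [← Wd_succ, ← Wd_succ]
      exact hlt

lemma conj_apply (π : Equiv.Perm (Fin n)) (x : Fin n) :
    (π * Equiv.addRight (1 : Fin n) * π⁻¹) x = π (π.symm x + 1) := rfl

section Valid

variable {χ : Fin n → ℕ} {π : Equiv.Perm (Fin n)}

lemma adj_lt (hA : inA n π (desSet n ⇑(π * Equiv.addRight (1 : Fin n) * π⁻¹)) χ)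
    {i : ℕ} (h : i + 1 < n)
    (he : χ (π.symm ⟨i, Nat.lt_of_succ_lt h⟩) = χ (π.symm ⟨i + 1, h⟩)) :
    (π * Equiv.addRight (1 : Fin n) * π⁻¹) ⟨i, Nat.lt_of_succ_lt h⟩ <
      (π * Equiv.addRight (1 : Fin n) * π⁻¹) ⟨i + 1, h⟩ := by
  have hnd : i ∉ desSet n ⇑(π * Equiv.addRight (1 : Fin n) * π⁻¹) := by
    intro hdes
    exact absurd he (ne_of_lt ((hA i h).2 hdes))
  have hle : ¬ ((π * Equiv.addRight (1 : Fin n) * π⁻¹) ⟨i + 1, h⟩ <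
      (π * Equiv.addRight (1 : Fin n) * π⁻¹) ⟨i, Nat.lt_of_succ_lt h⟩) :=
    fun hlt => hnd ⟨h, hlt⟩
  refine lt_of_le_of_ne (not_lt.1 hle) ?_
  intro hh
  have h1 := (π * Equiv.addRight (1 : Fin n) * π⁻¹).injective hh
  simp only [Fin.mk.injEq] at h1
  omega

lemma chain_le (hA : inA n π (desSet n ⇑(π * Equiv.addRight (1 : Fin n) * π⁻¹)) χ) :
    ∀ (i j : ℕ) (hij : i ≤ j) (hj : j < n),
      χ (π.symm ⟨i, lt_of_le_of_lt hij hj⟩) ≤ χ (π.symm ⟨j, hj⟩) := by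
  intro i j hij
  induction j, hij using Nat.le_induction with
  | base => intro hj; exact le_rfl
  | succ j hij ih =>
    intro hj
    exact le_trans (ih (Nat.lt_of_succ_lt hj)) (hA j hj).1

lemma chain_sig (hA : inA n π (desSet n ⇑(π * Equiv.addRight (1 : Fin n) * π⁻¹)) χ) :
    ∀ (i j : ℕ) (hij : i < j) (hj : j < n),
      χ (π.symm ⟨i, lt_trans hij hj⟩) = χ (π.symm ⟨j, hj⟩) →
      (π * Equiv.addRight (1 : Fin n) * π⁻¹) ⟨i, lt_trans hij hj⟩ <
        (π * Equiv.addRight (1 : Fin n) * π⁻¹) ⟨j, hj⟩ := by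
  intro i j hij
  induction j, hij using Nat.le_induction with
  | base =>
    intro hj he
    exact adj_lt hA hj he
  | succ j hij ih =>
    intro hj he
    have hij' : i < j := hij
    have e1 : χ (π.symm ⟨i, lt_trans hij' (Nat.lt_of_succ_lt hj)⟩) ≤
        χ (π.symm ⟨j, Nat.lt_of_succ_lt hj⟩) :=
      chain_le hA i j (le_of_lt hij') (Nat.lt_of_succ_lt hj)
    have e2 : χ (π.symm ⟨j, Nat.lt_of_succ_lt hj⟩) ≤ χ (π.symm ⟨j + 1, hj⟩) := (hA j hj).1
    have eq1 : χ (π.symm ⟨i, lt_trans hij' (Nat.lt_of_succ_lt hj)⟩) =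
        χ (π.symm ⟨j, Nat.lt_of_succ_lt hj⟩) := by
      refine le_antisymm e1 ?_
      rw [he]
      exact e2
    have eq2 : χ (π.symm ⟨j, Nat.lt_of_succ_lt hj⟩) = χ (π.symm ⟨j + 1, hj⟩) :=
      eq1.symm.trans he
    exact lt_trans (ih (Nat.lt_of_succ_lt hj) eq1) (adj_lt hA hj eq2)

lemma valid_head (hA : inA n π (desSet n ⇑(π * Equiv.addRight (1 : Fin n) * π⁻¹)) χ)
    {t s : Fin n} (h : π t < π s) : χ t ≤ χ s := by
  have hlt : ((π t : Fin n) : ℕ) < ((π s : Fin n) : ℕ) := h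
  have h1 := chain_le hA ((π t : Fin n) : ℕ) ((π s : Fin n) : ℕ) (le_of_lt hlt) (π s).isLt
  simpa using h1

lemma valid_step (hA : inA n π (desSet n ⇑(π * Equiv.addRight (1 : Fin n) * π⁻¹)) χ)
    {t s : Fin n} (h : π t < π s) (he : χ t = χ s) : π (t + 1) < π (s + 1) := by
  have hlt : ((π t : Fin n) : ℕ) < ((π s : Fin n) : ℕ) := h
  have h2 := chain_sig hA ((π t : Fin n) : ℕ) ((π s : Fin n) : ℕ) hlt (π s).isLt
    (by simpa using he)
  simpa [conj_apply] using h2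

lemma valid_M (hp : n.Prime) (hnc : ∃ t s, χ t ≠ χ s)
    (hA : inA n π (desSet n ⇑(π * Equiv.addRight (1 : Fin n) * π⁻¹)) χ)
    {t s : Fin n} (h : π t < π s) : Vw χ t < Vw χ s := by
  have hts : t ≠ s := by
    rintro rfl
    exact lt_irrefl _ h
  have hex : ∃ k : ℕ, Wd χ t k ≠ Wd χ s k := by
    by_contra hno
    push_neg at hno
    have : Vw χ t = Vw χ s := congrArg toLex (funext hno)
    exact hts (Vw_injective hp hnc this)
  have hpre : ∀ m, m < Nat.find hex → Wd χ t m = Wd χ s m :=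
    fun m hm => not_ne_iff.1 (Nat.find_min hex hm)
  have hstep : ∀ m : ℕ, m ≤ Nat.find hex → π (t + (m : Fin n)) < π (s + (m : Fin n)) := by
    intro m
    induction m with
    | zero =>
      intro _
      simpa using h
    | succ m ih =>
      intro hm
      have h1 := ih (Nat.le_of_succ_le hm)
      have h2 : χ (t + (m : Fin n)) = χ (s + (m : Fin n)) :=
        hpre m (lt_of_lt_of_le (Nat.lt_succ_self m) hm)
      have h3 := valid_step hA h1 h2
      have e : ∀ x : Fin n, x + (((m + 1 : ℕ)) : Fin n) = x + (m : Fin n) + 1 := by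
        intro x
        push_cast
        ring
      rw [e t, e s]
      exact h3
  have hfin := hstep (Nat.find hex) le_rfl
  have hhd : Wd χ t (Nat.find hex) ≤ Wd χ s (Nat.find hex) := valid_head hA hfin
  exact Vw_lt_iff.2 ⟨Nat.find hex, hpre, lt_of_le_of_ne hhd (Nat.find_spec hex)⟩

end Valid

lemma valid_unique (hp : n.Prime) {χ : Fin n → ℕ} (hnc : ∃ t s, χ t ≠ χ s)
    {π₁ π₂ : Equiv.Perm (Fin n)}
    (h₁ : inA n π₁ (desSet n ⇑(π₁ * Equiv.addRight (1 : Fin n) * π₁⁻¹)) χ)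
    (h₂ : inA n π₂ (desSet n ⇑(π₂ * Equiv.addRight (1 : Fin n) * π₂⁻¹)) χ) : π₁ = π₂ := by
  have hVi := Vw_injective hp hnc
  have sm : ∀ π : Equiv.Perm (Fin n),
      inA n π (desSet n ⇑(π * Equiv.addRight (1 : Fin n) * π⁻¹)) χ →
      StrictMono (fun i => Vw χ (π.symm i)) := by
    intro π hA i j hij
    exact valid_M hp hnc hA (by simpa using hij)
  have e1 : ∀ π : Equiv.Perm (Fin n),
      Set.range (fun i => Vw χ (π.symm i)) = Set.range (Vw χ) :=
    fun π => Function.Surjective.range_comp π.symm.surjective (Vw χ)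
  have hr : Set.range (fun i => Vw χ (π₁.symm i)) = Set.range (fun i => Vw χ (π₂.symm i)) := by
    rw [e1, e1]
  haveI : WellFoundedLT (Fin n) := inferInstance
  have heq := (StrictMono.range_inj (β := Fin n) (γ := Lex (ℕ → ℕ)) (sm π₁ h₁) (sm π₂ h₂)).1 hr
  have hsymm : π₁.symm = π₂.symm := by
    apply Equiv.ext
    intro x
    exact hVi (congrFun heq x)
  have := congrArg Equiv.symm hsymm
  simpa using this

lemma exists_valid (hp : n.Prime) {χ : Fin n → ℕ} (hnc : ∃ t s, χ t ≠ χ s) :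
    ∃ π : Equiv.Perm (Fin n),
      inA n π (desSet n ⇑(π * Equiv.addRight (1 : Fin n) * π⁻¹)) χ := by
  classical
  have hVi := Vw_injective hp hnc
  have hcard : (Finset.univ.image (Vw χ)).card = n := by
    rw [Finset.card_image_of_injective _ hVi, Finset.card_univ, Fintype.card_fin]
  have hmem : ∀ t, Vw χ t ∈ Finset.univ.image (Vw χ) :=
    fun t => Finset.mem_image_of_mem _ (Finset.mem_univ t)
  have hbij : Function.Bijective
      (fun t : Fin n => (⟨Vw χ t, hmem t⟩ : {x // x ∈ Finset.univ.image (Vw χ)})) := by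
    rw [Fintype.bijective_iff_injective_and_card]
    constructor
    · intro a b hab
      exact hVi (congrArg Subtype.val hab)
    · rw [Fintype.card_coe, hcard, Fintype.card_fin]
  let e : Fin n ≃ {x // x ∈ Finset.univ.image (Vw χ)} := Equiv.ofBijective _ hbij
  let iso := (Finset.univ.image (Vw χ)).orderIsoOfFin hcard
  let π : Equiv.Perm (Fin n) := e.trans iso.toEquiv.symm
  have hM : ∀ t u : Fin n, π t < π u ↔ Vw χ t < Vw χ u := by
    intro t u
    show iso.symm (e t) < iso.symm (e u) ↔ _
    rw [iso.symm.lt_iff_lt]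
    exact Subtype.mk_lt_mk
  refine ⟨π, ?_⟩
  intro i h
  have h1 : π (π.symm ⟨i, Nat.lt_of_succ_lt h⟩) < π (π.symm ⟨i + 1, h⟩) := by
    simp only [Equiv.apply_symm_apply]
    exact Fin.mk_lt_mk.2 (Nat.lt_succ_self i)
  have h2 : Vw χ (π.symm ⟨i, Nat.lt_of_succ_lt h⟩) < Vw χ (π.symm ⟨i + 1, h⟩) := (hM _ _).1 h1
  refine ⟨head_le h2, fun hdes => ?_⟩
  by_contra hnlt
  have heq : χ (π.symm ⟨i, Nat.lt_of_succ_lt h⟩) = χ (π.symm ⟨i + 1, h⟩) :=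
    le_antisymm (head_le h2) (not_lt.1 hnlt)
  have h3 := shift_lt h2 heq
  have h4 := (hM _ _).2 h3
  obtain ⟨hh, hlt⟩ := hdes
  exact lt_asymm h4 hlt

lemma exists_descent (h2 : 2 ≤ n) (π : Equiv.Perm (Fin n)) :
    ∃ i, i ∈ desSet n ⇑(π * Equiv.addRight (1 : Fin n) * π⁻¹) := by
  by_contra hno
  push_neg at hno
  have hadj : ∀ (i : ℕ) (h : i + 1 < n),
      (π * Equiv.addRight (1 : Fin n) * π⁻¹) ⟨i, Nat.lt_of_succ_lt h⟩ <
        (π * Equiv.addRight (1 : Fin n) * π⁻¹) ⟨i + 1, h⟩ := by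
    intro i h
    have h1 : ¬ ((π * Equiv.addRight (1 : Fin n) * π⁻¹) ⟨i + 1, h⟩ <
        (π * Equiv.addRight (1 : Fin n) * π⁻¹) ⟨i, Nat.lt_of_succ_lt h⟩) :=
      fun hlt => hno i ⟨h, hlt⟩
    refine lt_of_le_of_ne (not_lt.1 h1) ?_
    intro hh
    have h3 := (π * Equiv.addRight (1 : Fin n) * π⁻¹).injective hh
    simp only [Fin.mk.injEq] at h3
    omega
  have hchain : ∀ (i j : ℕ) (hij : i < j) (hj : j < n),
      (π * Equiv.addRight (1 : Fin n) * π⁻¹) ⟨i, lt_trans hij hj⟩ <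
        (π * Equiv.addRight (1 : Fin n) * π⁻¹) ⟨j, hj⟩ := by
    intro i j hij
    induction j, hij using Nat.le_induction with
    | base =>
      intro hj
      exact hadj i hj
    | succ j hij ih =>
      intro hj
      exact lt_trans (ih (Nat.lt_of_succ_lt hj)) (hadj j hj)
  have hmono : StrictMono ⇑(π * Equiv.addRight (1 : Fin n) * π⁻¹) := by
    intro a b hab
    have h5 := hchain a.val b.val hab b.isLt
    simpa using h5
  haveI : WellFoundedLT (Fin n) := inferInstance
  have hid : ⇑(π * Equiv.addRight (1 : Fin n) * π⁻¹) = id := by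
    refine (StrictMono.range_inj (β := Fin n) (γ := Fin n) hmono strictMono_id).1 ?_
    rw [Set.range_id, Equiv.range_eq_univ]
  have h0 : (π * Equiv.addRight (1 : Fin n) * π⁻¹) (π 0) = π 0 := by
    rw [hid]
    rfl
  have h1 : (π * Equiv.addRight (1 : Fin n) * π⁻¹) (π 0) = π (0 + 1) := by
    show π (π.symm (π 0) + 1) = π (0 + 1)
    rw [Equiv.symm_apply_apply]
  rw [h1] at h0
  have h6 := π.injective h0
  have hval : ((0 + 1 : Fin n) : ℕ) = 1 := by
    rw [zero_add, Fin.val_one']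
    exact Nat.mod_eq_of_lt h2
  rw [h6] at hval
  simp at hval

lemma nonconst_of_valid (h2 : 2 ≤ n) {π : Equiv.Perm (Fin n)} {g : Fin n → ℕ}
    (hg : Fpred n (desSet n ⇑(π * Equiv.addRight (1 : Fin n) * π⁻¹)) g) :
    ∃ t s : Fin n, g (π t) ≠ g (π s) := by
  obtain ⟨i, hi⟩ := exists_descent h2 π
  obtain ⟨h, hlt⟩ := hi
  have hmem : i ∈ desSet n ⇑(π * Equiv.addRight (1 : Fin n) * π⁻¹) := ⟨h, hlt⟩
  have hs := (hg i h).2 hmem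
  exact ⟨π.symm ⟨i, Nat.lt_of_succ_lt h⟩, π.symm ⟨i + 1, h⟩, by
    simp only [Equiv.apply_symm_apply]
    exact ne_of_lt hs⟩

lemma finite_cont (n : ℕ) (d : ℕ →₀ ℕ) : Finite {f : Fin n → ℕ // Cont n f d} := by
  have hmem : ∀ (fc : {f : Fin n → ℕ // Cont n f d}) (t : Fin n), fc.1 t ∈ d.support := by
    intro fc t
    rw [Finsupp.mem_support_iff, fc.2 (fc.1 t)]
    have h1 : Nonempty {u : Fin n // fc.1 u = fc.1 t} := ⟨⟨t, rfl⟩⟩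
    have h2 := Nat.card_pos (α := {u : Fin n // fc.1 u = fc.1 t})
    omega
  apply Finite.of_injective
    (fun fc : {f : Fin n → ℕ // Cont n f d} =>
      (fun t => (⟨fc.1 t, hmem fc t⟩ : {j // j ∈ d.support})))
  intro a b hab
  apply Subtype.ext
  funext t
  exact congrArg Subtype.val (congrFun hab t)

lemma card_sigma_eq (hp : n.Prime) (d : ℕ →₀ ℕ) :
    (∑ π : Equiv.Perm (Fin n), Nat.card {g : Fin n → ℕ //
        Fpred n (desSet n ⇑(π * Equiv.addRight (1 : Fin n) * π⁻¹)) g ∧ Cont n g d})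
      = Nat.card {f : Fin n → ℕ // Cont n f d ∧ ∃ t s, f t ≠ f s} := by
  classical
  have h2n : 2 ≤ n := hp.two_le
  haveI hCfin := finite_cont n d
  haveI hGfin : ∀ π : Equiv.Perm (Fin n), Finite {g : Fin n → ℕ //
      Fpred n (desSet n ⇑(π * Equiv.addRight (1 : Fin n) * π⁻¹)) g ∧ Cont n g d} :=
    fun π => Finite.of_injective
      (fun x => (⟨x.1, x.2.2⟩ : {f : Fin n → ℕ // Cont n f d}))
      (fun a b h => by
        simp only [Subtype.mk.injEq] at h
        exact Subtype.ext h)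
  haveI hGfty : ∀ π : Equiv.Perm (Fin n), Fintype {g : Fin n → ℕ //
      Fpred n (desSet n ⇑(π * Equiv.addRight (1 : Fin n) * π⁻¹)) g ∧ Cont n g d} :=
    fun π => Fintype.ofFinite _
  have h1 : (∑ π : Equiv.Perm (Fin n), Nat.card {g : Fin n → ℕ //
        Fpred n (desSet n ⇑(π * Equiv.addRight (1 : Fin n) * π⁻¹)) g ∧ Cont n g d})
      = Nat.card (Σ π : Equiv.Perm (Fin n), {g : Fin n → ℕ //
        Fpred n (desSet n ⇑(π * Equiv.addRight (1 : Fin n) * π⁻¹)) g ∧ Cont n g d}) := by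
    rw [Nat.card_eq_fintype_card, Fintype.card_sigma]
    exact Finset.sum_congr rfl fun π _ => Nat.card_eq_fintype_card
  rw [h1]
  apply Nat.card_congr
  refine Equiv.ofBijective (fun x => ⟨fun u => x.2.1 (x.1 u), ?_, ?_⟩) ⟨?_, ?_⟩
  · intro j
    rw [x.2.2.2 j]
    exact (Nat.card_congr (Equiv.subtypeEquiv x.1 fun a => Iff.rfl)).symm
  · exact nonconst_of_valid h2n x.2.2.1
  · rintro ⟨π₁, g₁, hg₁, hc₁⟩ ⟨π₂, g₂, hg₂, hc₂⟩ hEq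
    have hfun : (fun u => g₁ (π₁ u)) = (fun u => g₂ (π₂ u)) := congrArg Subtype.val hEq
    have hnc : ∃ t s : Fin n, g₁ (π₁ t) ≠ g₁ (π₁ s) := nonconst_of_valid h2n hg₁
    have hA₁ : inA n π₁ (desSet n ⇑(π₁ * Equiv.addRight (1 : Fin n) * π₁⁻¹))
        (fun u => g₁ (π₁ u)) := by
      intro i h
      simpa using hg₁ i h
    have hA₂ : inA n π₂ (desSet n ⇑(π₂ * Equiv.addRight (1 : Fin n) * π₂⁻¹))
        (fun u => g₂ (π₂ u)) := by
      intro i h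
      simpa using hg₂ i h
    rw [← hfun] at hA₂
    have hπ : π₁ = π₂ := valid_unique hp hnc hA₁ hA₂
    subst hπ
    have hgg : g₁ = g₂ := by
      funext x
      have h3 := congrFun hfun (π₁.symm x)
      simpa using h3
    exact congrArg (Sigma.mk π₁) (Subtype.ext hgg)
  · rintro ⟨f, hc, hnc⟩
    obtain ⟨π, hA⟩ := exists_valid hp hnc
    refine ⟨⟨π, ⟨fun x => f (π.symm x), ?_, ?_⟩⟩, ?_⟩
    · exact hA
    · intro j
      rw [hc j]
      exact Nat.card_congr (Equiv.subtypeEquiv π fun a => by simp)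
    · apply Subtype.ext
      funext u
      show f (π.symm (π u)) = f u
      rw [Equiv.symm_apply_apply]

omit [NeZero n] in
lemma card_split (d : ℕ →₀ ℕ) :
    Nat.card {f : Fin n → ℕ // Cont n f d}
      = Nat.card {f : Fin n → ℕ // Cont n f d ∧ ∃ t s, f t ≠ f s}
        + Nat.card {f : Fin n → ℕ // Cont n f d ∧ ¬ ∃ t s, f t ≠ f s} := by
  classical
  haveI := finite_cont n d
  haveI f1 : Finite {f : Fin n → ℕ // Cont n f d ∧ ∃ t s, f t ≠ f s} :=
    Finite.of_injective (fun x => (⟨x.1, x.2.1⟩ : {f : Fin n → ℕ // Cont n f d}))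
      (fun a b h => by
        simp only [Subtype.mk.injEq] at h
        exact Subtype.ext h)
  haveI f2 : Finite {f : Fin n → ℕ // Cont n f d ∧ ¬ ∃ t s, f t ≠ f s} :=
    Finite.of_injective (fun x => (⟨x.1, x.2.1⟩ : {f : Fin n → ℕ // Cont n f d}))
      (fun a b h => by
        simp only [Subtype.mk.injEq] at h
        exact Subtype.ext h)
  rw [← Nat.card_sum]
  apply Nat.card_congr
  exact ((Equiv.sumCompl fun x : {f : Fin n → ℕ // Cont n f d} =>
      ∃ t s, x.1 t ≠ x.1 s).symm.trans
    (Equiv.sumCongr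
      (Equiv.subtypeSubtypeEquivSubtypeInter
        (fun f : Fin n → ℕ => Cont n f d) (fun f => ∃ t s, f t ≠ f s))
      (Equiv.subtypeSubtypeEquivSubtypeInter
        (fun f : Fin n → ℕ => Cont n f d) (fun f => ¬ ∃ t s, f t ≠ f s))))

open Classical in
lemma card_const (d : ℕ →₀ ℕ) :
    Nat.card {f : Fin n → ℕ // Cont n f d ∧ ¬ ∃ t s, f t ≠ f s}
      = if ∃ j, d = Finsupp.single j n then 1 else 0 := by
  have hnpos : 0 < n := Nat.pos_of_ne_zero (NeZero.ne n)
  have hval : ∀ (j : ℕ) (f : Fin n → ℕ), Cont n f (Finsupp.single j n) →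
      (∀ t s, f t = f s) → ∀ t, f t = j := by
    intro j f hf hcon t
    have hcard : Nat.card {u : Fin n // f u = f t} = n := by
      rw [Nat.card_congr (Equiv.subtypeUnivEquiv (fun u => hcon u t)),
        Nat.card_eq_fintype_card, Fintype.card_fin]
    have hd := hf (f t)
    rw [hcard] at hd
    by_contra hne
    rw [Finsupp.single_apply, if_neg (fun hh => hne hh.symm)] at hd
    omega
  split_ifs with hj
  · obtain ⟨j, rfl⟩ := hj
    rw [Nat.card_eq_one_iff_unique]
    constructor
    · constructor
      rintro ⟨f, hf, hcon⟩ ⟨f', hf', hcon'⟩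
      push_neg at hcon hcon'
      apply Subtype.ext
      funext t
      show f t = f' t
      rw [hval j f hf hcon t, hval j f' hf' hcon' t]
    · refine ⟨⟨fun _ => j, ?_, ?_⟩⟩
      · intro i
        rcases eq_or_ne i j with rfl | hne
        · rw [Finsupp.single_eq_same,
            Nat.card_congr (Equiv.subtypeUnivEquiv (fun u => rfl)),
            Nat.card_eq_fintype_card, Fintype.card_fin]
        · rw [Finsupp.single_apply, if_neg (fun hh => hne hh.symm)]
          haveI : IsEmpty {t : Fin n // (fun _ : Fin n => j) t = i} :=
            ⟨fun x => hne (x.2.symm ▸ rfl)⟩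
          exact (Nat.card_of_isEmpty).symm
      · push_neg
        intro t s
        rfl
  · haveI : IsEmpty {f : Fin n → ℕ // Cont n f d ∧ ¬ ∃ t s, f t ≠ f s} := by
      refine ⟨fun x => hj ?_⟩
      obtain ⟨f, hf, hcon⟩ := x
      push_neg at hcon
      refine ⟨f ⟨0, hnpos⟩, ?_⟩
      ext i
      rw [hf i]
      rcases eq_or_ne i (f ⟨0, hnpos⟩) with rfl | hne
      · rw [Finsupp.single_eq_same,
          Nat.card_congr (Equiv.subtypeUnivEquiv (fun u => hcon u ⟨0, hnpos⟩)),
          Nat.card_eq_fintype_card, Fintype.card_fin]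
      · rw [Finsupp.single_apply, if_neg (fun hh => hne hh.symm)]
        haveI : IsEmpty {t : Fin n // f t = i} :=
          ⟨fun x => hne (x.2 ▸ (hcon x.1 ⟨0, hnpos⟩) ▸ rfl)⟩
        exact Nat.card_of_isEmpty
    rw [Nat.card_of_isEmpty]

end Cyclic

end CycAux



theorem powerSum_eq_sum_funF (n : ℕ) [NeZero n] (hn : n.Prime) :
    powerSum 1 ^ n - powerSum n =
      ∑ π : Equiv.Perm (Fin n),
        funF n (desSet n ⇑(π * Equiv.addRight (1 : Fin n) * π⁻¹)) := by
  classical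
  apply MvPowerSeries.ext
  intro d
  rw [map_sub, map_sum]
  have hL1 : MvPowerSeries.coeff d (powerSum 1 ^ n)
      = ((Nat.card {f : Fin n → ℕ // CycAux.Cont n f d} : ℕ) : ℚ) :=
    CycAux.coeff_pow_one n d
  have hL2 : MvPowerSeries.coeff d (powerSum n)
      = if ∃ j, d = Finsupp.single j n then (1 : ℚ) else 0 := rfl
  have hR : ∀ π : Equiv.Perm (Fin n),
      MvPowerSeries.coeff d (funF n (desSet n ⇑(π * Equiv.addRight (1 : Fin n) * π⁻¹)))
        = ((Nat.card {g : Fin n → ℕ //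
            CycAux.Fpred n (desSet n ⇑(π * Equiv.addRight (1 : Fin n) * π⁻¹)) g ∧
            CycAux.Cont n g d} : ℕ) : ℚ) := fun π => rfl
  rw [hL1, hL2, Finset.sum_congr rfl fun π _ => hR π, ← Nat.cast_sum,
    CycAux.card_sigma_eq hn d, CycAux.card_split (d := d), CycAux.card_const (d := d)]
  push_cast
  split_ifs <;> ring
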